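/- Set L = exp(2 · var φ + M · ‖φ‖). For every natural number n, every n-cylinder [v] and every (n+1)-cylinder [w] with [w] ⊆ [v] satisfy μ([w]) ≥ L^{−1} · exp(−‖φ‖) · μ([v]). -/

import Mathlib

open MeasureTheory Real
open scoped ENNReal

variable {r : ℕ}

/-- The one-sided subshift of finite type determined by the transition
matrix `A`. -/
abbrev OneSided (A : Fin r → Fin r → Prop) : Type :=
  {x : ℕ → Fin r // ∀ i, A (x i) (x (i + 1))}

/-- The shift map `σ` on the one-sided subshift. -/
def shift1 {A : Fin r → Fin r → Prop} (x : OneSided A) : OneSided A :=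
  ⟨fun i => x.1 (i + 1), fun i => x.2 (i + 1)⟩

/-- The metric `d(x,y) = ∑_{i ∈ ℕ, x i ≠ y i} 2^{-i}` on the one-sided
subshift. -/
noncomputable def dist1 {A : Fin r → Fin r → Prop} (x y : OneSided A) : ℝ :=
  ∑' i : ℕ, if x.1 i ≠ y.1 i then ((2 : ℝ)⁻¹) ^ i else 0

/-- `ψ` is Hölder with respect to the distance function `d`. -/
def IsHolderWrt {X : Type*} (d : X → X → ℝ) (ψ : X → ℝ) : Prop :=
  ∃ C > 0, ∃ α ∈ Set.Ioc (0 : ℝ) 1, ∀ x y, |ψ x - ψ y| ≤ C * d x y ^ α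

/-- A word `w : Fin n → Fin r` is admissible if `A (w i) (w (i+1))` for all
`i < n − 1`. -/
def AdmissibleWord {n : ℕ} (A : Fin r → Fin r → Prop) (w : Fin n → Fin r) : Prop :=
  ∀ i : ℕ, ∀ h : i + 1 < n, A (w ⟨i, Nat.lt_of_succ_lt h⟩) (w ⟨i + 1, h⟩)

/-- The `n`-cylinder `[w]` of a word `w : Fin n → Fin r`. -/
def Cyl (A : Fin r → Fin r → Prop) {n : ℕ} (w : Fin n → Fin r) : Set (OneSided A) :=
  {x | ∀ i : Fin n, x.1 i = w i}

/-- `(P, μ)` is a conformal pair for `φ`: `μ` is a Borel probability measure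
with `μ(σ '' E) = ∫_E exp(P − φ) dμ` for every Borel `E` contained in a
1-cylinder.  This encodes `log(dμ(σx)/dμ(x)) = −φ(x) + P`. -/
def ConformalPair (A : Fin r → Fin r → Prop) (φ : OneSided A → ℝ) (P : ℝ)
    (μ : Measure (OneSided A)) : Prop :=
  IsProbabilityMeasure μ ∧
    ∀ (j : Fin r) (E : Set (OneSided A)), MeasurableSet E → (∀ x ∈ E, x.1 0 = j) →
      μ (shift1 '' E) = ∫⁻ x in E, ENNReal.ofReal (Real.exp (P - φ x)) ∂μ

/-- `Σ_A⁺` is transitive: some point has dense forward orbit under `σ`. -/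
def Transitive1 (A : Fin r → Fin r → Prop) : Prop :=
  ∃ x : OneSided A, Dense (Set.range fun n : ℕ => shift1^[n] x)

/-- `Σ_A⁺` is mixing with constant `M`: for all symbols `i`, `j` there is an
admissible word of length `M+1` beginning with `i` and ending with `j`. -/
def MixingWith (A : Fin r → Fin r → Prop) (M : ℕ) : Prop :=
  1 ≤ M ∧ ∀ i j : Fin r, ∃ w : Fin (M + 1) → Fin r,
    AdmissibleWord A w ∧ w 0 = i ∧ w (Fin.last M) = j


/-- `‖φ‖ = sup_x |φ(x)|`. -/
noncomputable def supNorm (A : Fin r → Fin r → Prop) (φ : OneSided A → ℝ) : ℝ :=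
  ⨆ x : OneSided A, |φ x|

/-- `var_k φ = sup {|φ(x) − φ(y)| : x i = y i for all i < k}`. -/
noncomputable def varK (A : Fin r → Fin r → Prop) (φ : OneSided A → ℝ) (k : ℕ) : ℝ :=
  sSup {v : ℝ | ∃ x y : OneSided A, (∀ i : ℕ, i < k → x.1 i = y.1 i) ∧ v = |φ x - φ y|}

/-- `var φ = ∑_{k=0}^∞ var_k φ`. -/
noncomputable def varSum (A : Fin r → Fin r → Prop) (φ : OneSided A → ℝ) : ℝ :=
  ∑' k : ℕ, varK A φ k


/-! ### Auxiliary development for the proof -/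

namespace GibbsAux

variable {r : ℕ} {A : Fin r → Fin r → Prop}

/-- The 1-cylinder of a symbol. -/
def OneCyl (A : Fin r → Fin r → Prop) (b : Fin r) : Set (OneSided A) := {x | x.1 0 = b}

lemma mem_cyl {n : ℕ} {u : Fin n → Fin r} {x : OneSided A} :
    x ∈ Cyl A u ↔ ∀ i : Fin n, x.1 i = u i := Iff.rfl

lemma measurable_coord (i : ℕ) : Measurable (fun x : OneSided A => x.1 i) :=
  (measurable_pi_apply i).comp measurable_subtype_coe

lemma measurableSet_cyl {n : ℕ} (u : Fin n → Fin r) : MeasurableSet (Cyl A u) := by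
  have h : Cyl A u = ⋂ i : Fin n, (fun x : OneSided A => x.1 i) ⁻¹' {u i} := by
    ext x; simp [Cyl, Set.mem_iInter]
  rw [h]
  exact MeasurableSet.iInter fun i => (measurable_coord _) (measurableSet_singleton _)

lemma measurableSet_oneCyl (b : Fin r) : MeasurableSet (OneCyl A b) :=
  (measurable_coord 0) (measurableSet_singleton b)

lemma summable_ite (x y : OneSided A) :
    Summable (fun i : ℕ => if x.1 i ≠ y.1 i then ((2:ℝ)⁻¹) ^ i else 0) := by
  refine Summable.of_nonneg_of_le (fun i => ?_) (fun i => ?_)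
    (summable_geometric_of_lt_one (r := (2:ℝ)⁻¹) (by norm_num) (by norm_num))
  · split <;> positivity
  · split
    · exact le_rfl
    · positivity

lemma dist1_nonneg (x y : OneSided A) : 0 ≤ dist1 x y := by
  refine tsum_nonneg fun i => ?_
  split <;> positivity

lemma dist1_le_of_agree {x y : OneSided A} (k : ℕ) (h : ∀ i, i < k → x.1 i = y.1 i) :
    dist1 x y ≤ 2 * ((2:ℝ)⁻¹) ^ k := by
  have hgeo : Summable (fun i : ℕ => ((2:ℝ)⁻¹) ^ i) :=
    summable_geometric_of_lt_one (by norm_num) (by norm_num)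
  set g : ℕ → ℝ := fun i => if i < k then 0 else ((2:ℝ)⁻¹) ^ i with hg
  have hsg : Summable g := by
    refine Summable.of_nonneg_of_le (fun i => ?_) (fun i => ?_) hgeo
    · simp only [hg]; split <;> positivity
    · simp only [hg]; split
      · positivity
      · exact le_rfl
  have h1 : dist1 x y ≤ ∑' i, g i := by
    refine Summable.tsum_le_tsum (fun i => ?_) (summable_ite x y) hsg
    by_cases hi : x.1 i ≠ y.1 i
    · have hik : ¬ i < k := fun hk => hi (h i hk)
      simp [hg, hi, hik]
    · simp only [hg, if_neg hi]
      split <;> positivity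
  have h2 : ∑' i, g i = 2 * ((2:ℝ)⁻¹) ^ k := by
    have hadd := Summable.sum_add_tsum_nat_add k hsg
    have hz : ∑ i ∈ Finset.range k, g i = 0 :=
      Finset.sum_eq_zero (fun i hi => by simp [hg, Finset.mem_range.mp hi])
    have hshift : (fun i => g (i + k)) = fun i => ((2:ℝ)⁻¹) ^ i * ((2:ℝ)⁻¹) ^ k := by
      funext i
      simp only [hg]
      rw [if_neg (by omega), pow_add]
    rw [hz, zero_add] at hadd
    rw [← hadd, hshift, tsum_mul_right,
      tsum_geometric_of_lt_one (by norm_num) (by norm_num)]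
    norm_num [mul_comm]
  linarith

/-! ### Word operations -/

def tailW {m : ℕ} (u : Fin (m+2) → Fin r) : Fin (m+1) → Fin r := fun i => u i.succ

lemma tailW_adm {m : ℕ} {u : Fin (m+2) → Fin r} (hu : AdmissibleWord A u) :
    AdmissibleWord A (tailW u) := by
  intro i h
  have h2 : i + 1 + 1 < m + 2 := by omega
  have := hu (i+1) h2
  simpa [tailW, Fin.succ_mk] using this

lemma cyl_zero_coord {m : ℕ} {u : Fin (m+1) → Fin r} {x : OneSided A} (hx : x ∈ Cyl A u) :
    x.1 0 = u 0 := by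
  have := hx (0 : Fin (m+1))
  simpa using this

lemma shift_mem_tail {m : ℕ} {u : Fin (m+2) → Fin r} {z : OneSided A} (hz : z ∈ Cyl A u) :
    shift1 z ∈ Cyl A (tailW u) := by
  intro i
  have := hz i.succ
  simpa [shift1, tailW, Fin.val_succ] using this

lemma shift_image_cyl {m : ℕ} (u : Fin (m+2) → Fin r) (hu : AdmissibleWord A u) :
    shift1 '' Cyl A u = Cyl A (tailW u) := by
  ext y
  constructor
  · rintro ⟨x, hx, rfl⟩
    exact shift_mem_tail hx
  · intro hy
    have hy0 : y.1 0 = u 1 := by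
      have := hy (0 : Fin (m+1))
      simpa [tailW] using this
    have hA0 : A (u 0) (y.1 0) := by
      rw [hy0]
      have := hu 0 (by omega)
      convert this using 2 <;> ext <;> simp
    refine ⟨⟨fun j => Nat.casesOn j (u 0) (fun j => y.1 j), ?_⟩, ?_, ?_⟩
    · intro i
      cases i with
      | zero => exact hA0
      | succ j => exact y.2 j
    · intro i
      refine Fin.cases ?_ (fun j => ?_) i
      · simp
      · have := hy j
        simp only [Fin.val_succ]
        simpa [tailW] using this
    · apply Subtype.ext
      funext j
      rfl

lemma cyl_one_eq (u : Fin 1 → Fin r) : Cyl A u = OneCyl A (u 0) := by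
  ext x
  constructor
  · intro hx
    exact cyl_zero_coord hx
  · intro hx i
    have hi : i = 0 := Subsingleton.elim i 0
    subst hi
    exact hx

lemma cyl_empty (u : Fin 0 → Fin r) : Cyl A u = Set.univ := by
  ext x
  constructor
  · intro _; trivial
  · intro _ i; exact i.elim0

lemma cyl_subset_oneCyl {m : ℕ} (u : Fin (m+1) → Fin r) :
    Cyl A u ⊆ OneCyl A (u 0) := fun _ hx => cyl_zero_coord hx

/-! ### ENNReal / exp helpers -/

lemma ofReal_exp_mul (a b : ℝ) :
    ENNReal.ofReal (Real.exp a) * ENNReal.ofReal (Real.exp b)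
      = ENNReal.ofReal (Real.exp (a + b)) := by
  rw [← ENNReal.ofReal_mul (Real.exp_nonneg a), ← Real.exp_add]

lemma ofReal_exp_congr {a b : ℝ} (h : a = b) :
    ENNReal.ofReal (Real.exp a) = ENNReal.ofReal (Real.exp b) := by rw [h]

lemma ofReal_exp_le {a b : ℝ} (h : a ≤ b) :
    ENNReal.ofReal (Real.exp a) ≤ ENNReal.ofReal (Real.exp b) :=
  ENNReal.ofReal_le_ofReal (Real.exp_le_exp.mpr h)

/-! ### Integral bounds -/

lemma lint_le_of_le {μ : Measure (OneSided A)} {E : Set (OneSided A)} (hE : MeasurableSet E)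
    {f : OneSided A → ℝ} {c : ℝ} (h : ∀ x ∈ E, f x ≤ c) :
    ∫⁻ x in E, ENNReal.ofReal (Real.exp (f x)) ∂μ ≤ ENNReal.ofReal (Real.exp c) * μ E := by
  calc ∫⁻ x in E, ENNReal.ofReal (Real.exp (f x)) ∂μ
      ≤ ∫⁻ _ in E, ENNReal.ofReal (Real.exp c) ∂μ := by
        refine lintegral_mono_ae (ae_restrict_of_forall_mem hE (fun x hx => ?_))
        exact ENNReal.ofReal_le_ofReal (Real.exp_le_exp.mpr (h x hx))
    _ = ENNReal.ofReal (Real.exp c) * μ E := setLIntegral_const E _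

lemma lint_ge_of_ge {μ : Measure (OneSided A)} {E : Set (OneSided A)} (hE : MeasurableSet E)
    {f : OneSided A → ℝ} {c : ℝ} (h : ∀ x ∈ E, c ≤ f x) :
    ENNReal.ofReal (Real.exp c) * μ E ≤ ∫⁻ x in E, ENNReal.ofReal (Real.exp (f x)) ∂μ := by
  calc ENNReal.ofReal (Real.exp c) * μ E
      = ∫⁻ _ in E, ENNReal.ofReal (Real.exp c) ∂μ := (setLIntegral_const E _).symm
    _ ≤ ∫⁻ x in E, ENNReal.ofReal (Real.exp (f x)) ∂μ := by
        refine lintegral_mono_ae (ae_restrict_of_forall_mem hE (fun x hx => ?_))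
        exact ENNReal.ofReal_le_ofReal (Real.exp_le_exp.mpr (h x hx))

lemma step_measure {φ : OneSided A → ℝ} {μ : Measure (OneSided A)}
    (hpair : ConformalPair A φ 0 μ) {m : ℕ} (u : Fin (m+1) → Fin r) :
    μ (shift1 '' Cyl A u) = ∫⁻ x in Cyl A u, ENNReal.ofReal (Real.exp (0 - φ x)) ∂μ :=
  hpair.2 (u 0) _ (measurableSet_cyl u) (fun _ hx => cyl_zero_coord hx)

/-! ### The main iteration -/

lemma iter_bounds {φ : OneSided A → ℝ} {μ : Measure (OneSided A)}
    (hpair : ConformalPair A φ 0 μ)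
    (hvar : ∀ (k : ℕ) (x y : OneSided A), (∀ i, i < k → x.1 i = y.1 i) →
      |φ x - φ y| ≤ varK A φ k) :
    ∀ (m : ℕ) (u : Fin (m+1) → Fin r), AdmissibleWord A u → ∀ z ∈ Cyl A u,
      μ (OneCyl A (u (Fin.last m))) ≤
        ENNReal.ofReal (Real.exp (-(∑ k ∈ Finset.range m, φ (shift1^[k] z))
          + ∑ k ∈ Finset.range m, varK A φ (k+2))) * μ (Cyl A u)
      ∧ ENNReal.ofReal (Real.exp (-(∑ k ∈ Finset.range m, φ (shift1^[k] z))
          - ∑ k ∈ Finset.range m, varK A φ (k+2))) * μ (Cyl A u)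
        ≤ μ (OneCyl A (u (Fin.last m))) := by
  intro m
  induction m with
  | zero =>
    intro u hu z hz
    have he : OneCyl A (u (Fin.last 0)) = Cyl A u := by
      rw [cyl_one_eq u]
      congr 1
    rw [he]
    simp
  | succ m ih =>
    intro u hu z hz
    have hta := tailW_adm hu
    have hz' := shift_mem_tail hz
    have hlast : tailW u (Fin.last m) = u (Fin.last (m+1)) := by
      simp [tailW, Fin.succ_last]
    obtain ⟨ih1, ih2⟩ := ih (tailW u) hta (shift1 z) hz'
    have him : μ (Cyl A (tailW u)) = ∫⁻ x in Cyl A u, ENNReal.ofReal (Real.exp (0 - φ x)) ∂μ := by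
      rw [← shift_image_cyl u hu]
      exact step_measure hpair u
    have hagree : ∀ x ∈ Cyl A u, ∀ i, i < m + 2 → x.1 i = z.1 i := by
      intro x hx i hi
      rw [hx ⟨i, hi⟩, hz ⟨i, hi⟩]
    have hup : μ (Cyl A (tailW u)) ≤
        ENNReal.ofReal (Real.exp (-(φ z) + varK A φ (m+2))) * μ (Cyl A u) := by
      rw [him]
      refine lint_le_of_le (measurableSet_cyl u) (fun x hx => ?_)
      have h1 := hvar (m+2) x z (hagree x hx)
      have h2 := abs_le.mp h1
      linarith [h2.1]
    have hlo : ENNReal.ofReal (Real.exp (-(φ z) - varK A φ (m+2))) * μ (Cyl A u)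
        ≤ μ (Cyl A (tailW u)) := by
      rw [him]
      refine lint_ge_of_ge (measurableSet_cyl u) (fun x hx => ?_)
      have h1 := hvar (m+2) x z (hagree x hx)
      have h2 := abs_le.mp h1
      linarith [h2.2]
    have hS : ∑ k ∈ Finset.range (m+1), φ (shift1^[k] z)
        = (∑ k ∈ Finset.range m, φ (shift1^[k] (shift1 z))) + φ z := by
      rw [Finset.sum_range_succ']
      simp [Function.iterate_succ_apply]
    have hV : ∑ k ∈ Finset.range (m+1), varK A φ (k+2)
        = (∑ k ∈ Finset.range m, varK A φ (k+2)) + varK A φ (m+2) := by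
      rw [Finset.sum_range_succ]
    constructor
    · calc μ (OneCyl A (u (Fin.last (m+1))))
          = μ (OneCyl A (tailW u (Fin.last m))) := by rw [hlast]
        _ ≤ ENNReal.ofReal (Real.exp (-(∑ k ∈ Finset.range m, φ (shift1^[k] (shift1 z)))
              + ∑ k ∈ Finset.range m, varK A φ (k+2))) * μ (Cyl A (tailW u)) := ih1
        _ ≤ ENNReal.ofReal (Real.exp (-(∑ k ∈ Finset.range m, φ (shift1^[k] (shift1 z)))
              + ∑ k ∈ Finset.range m, varK A φ (k+2)))
            * (ENNReal.ofReal (Real.exp (-(φ z) + varK A φ (m+2))) * μ (Cyl A u)) :=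
            mul_le_mul_right hup _
        _ = ENNReal.ofReal (Real.exp (-(∑ k ∈ Finset.range (m+1), φ (shift1^[k] z))
              + ∑ k ∈ Finset.range (m+1), varK A φ (k+2))) * μ (Cyl A u) := by
            rw [← mul_assoc, ofReal_exp_mul]
            exact congrArg (fun t => t * μ (Cyl A u)) (ofReal_exp_congr (by rw [hS, hV]; ring))
    · calc ENNReal.ofReal (Real.exp (-(∑ k ∈ Finset.range (m+1), φ (shift1^[k] z))
              - ∑ k ∈ Finset.range (m+1), varK A φ (k+2))) * μ (Cyl A u)
          = ENNReal.ofReal (Real.exp (-(∑ k ∈ Finset.range m, φ (shift1^[k] (shift1 z)))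
              - ∑ k ∈ Finset.range m, varK A φ (k+2)))
            * (ENNReal.ofReal (Real.exp (-(φ z) - varK A φ (m+2))) * μ (Cyl A u)) := by
            rw [← mul_assoc, ofReal_exp_mul]
            exact congrArg (fun t => t * μ (Cyl A u)) (ofReal_exp_congr (by rw [hS, hV]; ring))
        _ ≤ ENNReal.ofReal (Real.exp (-(∑ k ∈ Finset.range m, φ (shift1^[k] (shift1 z)))
              - ∑ k ∈ Finset.range m, varK A φ (k+2))) * μ (Cyl A (tailW u)) :=
            mul_le_mul_right hlo _
        _ ≤ μ (OneCyl A (tailW u (Fin.last m))) := ih2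
        _ = μ (OneCyl A (u (Fin.last (m+1)))) := by rw [hlast]

/-! ### Crude iteration -/

lemma crude_bound {φ : OneSided A → ℝ} {μ : Measure (OneSided A)}
    (hpair : ConformalPair A φ 0 μ) {Nb : ℝ} (hN : ∀ x, 0 - φ x ≤ Nb) :
    ∀ (m : ℕ) (u : Fin (m+1) → Fin r), AdmissibleWord A u →
      μ (OneCyl A (u (Fin.last m))) ≤ ENNReal.ofReal (Real.exp (m * Nb)) * μ (Cyl A u) := by
  intro m
  induction m with
  | zero =>
    intro u hu
    have he : OneCyl A (u (Fin.last 0)) = Cyl A u := by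
      rw [cyl_one_eq u]
      congr 1
    rw [he]
    simp
  | succ m ih =>
    intro u hu
    have hta := tailW_adm hu
    have hlast : tailW u (Fin.last m) = u (Fin.last (m+1)) := by
      simp [tailW, Fin.succ_last]
    have him : μ (Cyl A (tailW u)) = ∫⁻ x in Cyl A u, ENNReal.ofReal (Real.exp (0 - φ x)) ∂μ := by
      rw [← shift_image_cyl u hu]
      exact step_measure hpair u
    have hup : μ (Cyl A (tailW u)) ≤ ENNReal.ofReal (Real.exp Nb) * μ (Cyl A u) := by
      rw [him]
      exact lint_le_of_le (measurableSet_cyl u) (fun x _ => hN x)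
    calc μ (OneCyl A (u (Fin.last (m+1))))
        = μ (OneCyl A (tailW u (Fin.last m))) := by rw [hlast]
      _ ≤ ENNReal.ofReal (Real.exp (m * Nb)) * μ (Cyl A (tailW u)) := ih (tailW u) hta
      _ ≤ ENNReal.ofReal (Real.exp (m * Nb)) * (ENNReal.ofReal (Real.exp Nb) * μ (Cyl A u)) :=
          mul_le_mul_right hup _
      _ = ENNReal.ofReal (Real.exp ((m+1 : ℕ) * Nb)) * μ (Cyl A u) := by
          rw [← mul_assoc, ofReal_exp_mul]
          congr 2
          push_cast
          ring

/-! ### Lower bound for 1-cylinders -/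

lemma one_cyl_lower {M : ℕ} (hmix : MixingWith A M) {φ : OneSided A → ℝ}
    {μ : Measure (OneSided A)} (hpair : ConformalPair A φ 0 μ)
    {Nb : ℝ} (hN : ∀ x, 0 - φ x ≤ Nb) (b : Fin r) :
    ENNReal.ofReal (Real.exp (-(M * Nb))) ≤ μ (OneCyl A b) := by
  haveI := hpair.1
  choose u hadm h0 hl using fun c => hmix.2 b c
  have hdisj : Pairwise (Function.onFun Disjoint fun c => Cyl A (u c)) := by
    intro c c' hcc
    rw [Function.onFun, Set.disjoint_left]
    intro x hx hx'
    have e1 : x.1 (Fin.last M) = c := (hx (Fin.last M)).trans (hl c)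
    have e2 : x.1 (Fin.last M) = c' := (hx' (Fin.last M)).trans (hl c')
    exact hcc (e1.symm.trans e2)
  have hsub : ∀ c, Cyl A (u c) ⊆ OneCyl A b := by
    intro c x hx
    exact (cyl_zero_coord hx).trans (h0 c)
  have h1 : (1 : ℝ≥0∞) ≤ ∑' c : Fin r, μ (OneCyl A c) := by
    calc (1 : ℝ≥0∞) = μ Set.univ := measure_univ.symm
      _ ≤ μ (⋃ c, OneCyl A c) := measure_mono (fun x _ => Set.mem_iUnion.mpr ⟨x.1 0, rfl⟩)
      _ ≤ ∑' c, μ (OneCyl A c) := measure_iUnion_le _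
  have h2 : ∀ c, μ (OneCyl A c) ≤ ENNReal.ofReal (Real.exp (M * Nb)) * μ (Cyl A (u c)) := by
    intro c
    have := crude_bound hpair hN M (u c) (hadm c)
    rwa [hl c] at this
  have h3 : ∑' c : Fin r, μ (Cyl A (u c)) = μ (⋃ c, Cyl A (u c)) :=
    (measure_iUnion hdisj (fun c => measurableSet_cyl _)).symm
  have h4 : μ (⋃ c, Cyl A (u c)) ≤ μ (OneCyl A b) :=
    measure_mono (Set.iUnion_subset hsub)
  have h5 : (1 : ℝ≥0∞) ≤ ENNReal.ofReal (Real.exp (M * Nb)) * μ (OneCyl A b) := by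
    calc (1 : ℝ≥0∞) ≤ ∑' c, μ (OneCyl A c) := h1
      _ ≤ ∑' c, ENNReal.ofReal (Real.exp (M * Nb)) * μ (Cyl A (u c)) :=
          ENNReal.tsum_le_tsum h2
      _ = ENNReal.ofReal (Real.exp (M * Nb)) * ∑' c, μ (Cyl A (u c)) := ENNReal.tsum_mul_left
      _ ≤ ENNReal.ofReal (Real.exp (M * Nb)) * μ (OneCyl A b) := by
          rw [h3]
          exact mul_le_mul_right h4 _
  calc ENNReal.ofReal (Real.exp (-(M * Nb)))
      = ENNReal.ofReal (Real.exp (-(M * Nb))) * 1 := (mul_one _).symm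
    _ ≤ ENNReal.ofReal (Real.exp (-(M * Nb)))
        * (ENNReal.ofReal (Real.exp (M * Nb)) * μ (OneCyl A b)) := mul_le_mul_right h5 _
    _ = ENNReal.ofReal (Real.exp (-(M * Nb) + M * Nb)) * μ (OneCyl A b) := by
        rw [← mul_assoc, ofReal_exp_mul]
    _ = μ (OneCyl A b) := by simp

end GibbsAux

/-- (Bounded ratio geometry for `μ`) With `L = exp(2·var φ + M·‖φ‖)`, for the
conformal measure `μ` of a Hölder `φ` with constant `P = 0`, any
`(n+1)`-cylinder `[w]` contained in an `n`-cylinder `[v]` satisfies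
`μ([w]) ≥ L⁻¹ · exp(−‖φ‖) · μ([v])`. -/
theorem gibbs_cylinder_bounded_ratio
    {A : Fin r → Fin r → Prop} (M : ℕ) (hmix : MixingWith A M)
    (hcylne : ∀ (n : ℕ) (w : Fin n → Fin r), AdmissibleWord A w → (Cyl A w).Nonempty)
    (φ : OneSided A → ℝ) (hφ : IsHolderWrt dist1 φ)
    (μ : Measure (OneSided A)) (hpair : ConformalPair A φ 0 μ)
    (n : ℕ) (v : Fin n → Fin r) (w : Fin (n + 1) → Fin r)
    (hv : AdmissibleWord A v) (hw : AdmissibleWord A w)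
    (hsub : Cyl A w ⊆ Cyl A v) :
    ENNReal.ofReal ((Real.exp (2 * varSum A φ + M * supNorm A φ))⁻¹ *
        Real.exp (-(supNorm A φ))) * μ (Cyl A v) ≤ μ (Cyl A w) := by
  classical
  open GibbsAux in
  obtain ⟨C, hC, α, ⟨hα0, hα1⟩, hH⟩ := hφ
  haveI := hpair.1
  obtain ⟨x₀, -⟩ := hcylne 0 (fun i => i.elim0) (fun i h => absurd h (by omega))
  -- Hölder consequences
  have hHb : ∀ (k : ℕ) (x y : OneSided A), (∀ i, i < k → x.1 i = y.1 i) →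
      |φ x - φ y| ≤ C * (2 * ((2:ℝ)⁻¹) ^ k) ^ α := fun k x y h =>
    (hH x y).trans (mul_le_mul_of_nonneg_left
      (Real.rpow_le_rpow (GibbsAux.dist1_nonneg x y) (GibbsAux.dist1_le_of_agree k h) hα0.le)
      hC.le)
  have hbddv : ∀ k : ℕ, BddAbove {v : ℝ | ∃ x y : OneSided A,
      (∀ i : ℕ, i < k → x.1 i = y.1 i) ∧ v = |φ x - φ y|} := by
    intro k
    refine ⟨C * (2 * ((2:ℝ)⁻¹) ^ k) ^ α, ?_⟩
    rintro t ⟨x, y, hxy, rfl⟩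
    exact hHb k x y hxy
  have hvar : ∀ (k : ℕ) (x y : OneSided A), (∀ i, i < k → x.1 i = y.1 i) →
      |φ x - φ y| ≤ varK A φ k := fun k x y h => le_csSup (hbddv k) ⟨x, y, h, rfl⟩
  have hvk0 : ∀ k, 0 ≤ varK A φ k := fun k =>
    le_csSup (hbddv k) ⟨x₀, x₀, fun _ _ => rfl, by simp⟩
  -- summability of varK
  have hpow : ∀ k : ℕ, (2 * ((2:ℝ)⁻¹) ^ k) ^ α = 2 ^ α * (((2:ℝ)⁻¹) ^ α) ^ k := by
    intro k
    rw [Real.mul_rpow (by norm_num) (pow_nonneg (by norm_num) k)]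
    congr 1
    rw [← Real.rpow_natCast ((2:ℝ)⁻¹) k, ← Real.rpow_mul (by norm_num),
      mul_comm (k:ℝ) α, Real.rpow_mul (by norm_num), Real.rpow_natCast]
  have hvk_le : ∀ k, varK A φ k ≤ (C * 2 ^ α) * (((2:ℝ)⁻¹) ^ α) ^ k := by
    intro k
    refine Real.sSup_le ?_ ?_
    · rintro t ⟨x, y, hxy, rfl⟩
      have h := hHb k x y hxy
      rw [hpow k, ← mul_assoc] at h
      exact h
    · have h1 : (0:ℝ) ≤ 2 ^ α := Real.rpow_nonneg (by norm_num) α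
      have h2 : (0:ℝ) ≤ (((2:ℝ)⁻¹) ^ α) ^ k :=
        pow_nonneg (Real.rpow_nonneg (by norm_num) α) k
      exact mul_nonneg (mul_nonneg hC.le h1) h2
  have hsummable : Summable (varK A φ) := by
    refine Summable.of_nonneg_of_le hvk0 hvk_le ?_
    exact (summable_geometric_of_lt_one (Real.rpow_nonneg (by norm_num) α)
      (Real.rpow_lt_one (by norm_num) (by norm_num) hα0)).mul_left _
  have hV0 : 0 ≤ varSum A φ := tsum_nonneg hvk0
  have hVm : ∀ m : ℕ, ∑ k ∈ Finset.range m, varK A φ (k+2) ≤ varSum A φ := by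
    intro m
    have h1 : ∑ k ∈ Finset.range m, varK A φ (k+2) ≤ ∑' k : ℕ, varK A φ (k+2) :=
      Summable.sum_le_tsum _ (fun i _ => hvk0 _) (hsummable.comp_injective (add_left_injective 2))
    have h2 : ∑' k : ℕ, varK A φ (k+2) ≤ ∑' k : ℕ, varK A φ k :=
      Summable.tsum_le_tsum_of_inj (fun k => k + 2) (add_left_injective 2) (fun c _ => hvk0 c)
        (fun k => le_rfl) (hsummable.comp_injective (add_left_injective 2)) hsummable
    exact h1.trans h2
  -- sup norm facts
  have hb2 : BddAbove (Set.range fun x : OneSided A => |φ x|) := by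
    refine ⟨C * (2 * ((2:ℝ)⁻¹) ^ 0) ^ α + |φ x₀|, ?_⟩
    rintro t ⟨x, rfl⟩
    have h1 := hHb 0 x x₀ (fun i hi => absurd hi (Nat.not_lt_zero i))
    have h2 : |φ x| ≤ |φ x - φ x₀| + |φ x₀| := by
      have : φ x = (φ x - φ x₀) + φ x₀ := by ring
      calc |φ x| = |(φ x - φ x₀) + φ x₀| := by rw [← this]
        _ ≤ |φ x - φ x₀| + |φ x₀| := abs_add_le _ _
    linarith
  have habs : ∀ x, |φ x| ≤ supNorm A φ := fun x => le_ciSup hb2 x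
  have hN0 : 0 ≤ supNorm A φ := Real.iSup_nonneg (fun x => abs_nonneg _)
  have hNe : ∀ x, 0 - φ x ≤ supNorm A φ := by
    intro x
    have := abs_le.mp (habs x)
    linarith [this.1]
  have hone : ∀ b : Fin r, ENNReal.ofReal (Real.exp (-(M * supNorm A φ))) ≤ μ (OneCyl A b) :=
    fun b => GibbsAux.one_cyl_lower hmix hpair hNe b
  -- rewrite the constant
  have hconst : (Real.exp (2 * varSum A φ + M * supNorm A φ))⁻¹ * Real.exp (-(supNorm A φ))
      = Real.exp (-(2 * varSum A φ + M * supNorm A φ) + -(supNorm A φ)) := by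
    rw [← Real.exp_neg, ← Real.exp_add]
  rw [hconst]
  cases n with
  | zero =>
    rw [GibbsAux.cyl_empty v, GibbsAux.cyl_one_eq w, measure_univ, mul_one]
    refine le_trans (GibbsAux.ofReal_exp_le ?_) (hone (w 0))
    have hMN : 0 ≤ (M:ℝ) * supNorm A φ := mul_nonneg (Nat.cast_nonneg M) hN0
    linarith
  | succ n =>
    obtain ⟨z, hz⟩ := hcylne (n+2) w hw
    have hzv : z ∈ Cyl A v := hsub hz
    have hw1 := (GibbsAux.iter_bounds hpair hvar (n+1) w hw z hz).1
    have hv2 := (GibbsAux.iter_bounds hpair hvar n v hv z hzv).2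
    set S0 := ∑ k ∈ Finset.range n, φ (shift1^[k] z) with hS0
    set S1 := ∑ k ∈ Finset.range (n+1), φ (shift1^[k] z) with hS1
    set V0 := ∑ k ∈ Finset.range n, varK A φ (k+2) with hV0d
    set V1 := ∑ k ∈ Finset.range (n+1), varK A φ (k+2) with hV1d
    have hμv : μ (Cyl A v) ≤ ENNReal.ofReal (Real.exp (S0 + V0)) := by
      calc μ (Cyl A v)
          = (ENNReal.ofReal (Real.exp (S0 + V0)) * ENNReal.ofReal (Real.exp (-S0 - V0)))
              * μ (Cyl A v) := by
            rw [GibbsAux.ofReal_exp_mul]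
            have : (S0 + V0) + (-S0 - V0) = 0 := by ring
            rw [this]
            simp
        _ = ENNReal.ofReal (Real.exp (S0 + V0))
              * (ENNReal.ofReal (Real.exp (-S0 - V0)) * μ (Cyl A v)) := mul_assoc _ _ _
        _ ≤ ENNReal.ofReal (Real.exp (S0 + V0)) * μ (OneCyl A (v (Fin.last n))) :=
            mul_le_mul_right hv2 _
        _ ≤ ENNReal.ofReal (Real.exp (S0 + V0)) * 1 := mul_le_mul_right prob_le_one _
        _ = ENNReal.ofReal (Real.exp (S0 + V0)) := mul_one _
    have hμw : ENNReal.ofReal (Real.exp (S1 - V1 - M * supNorm A φ)) ≤ μ (Cyl A w) := by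
      calc ENNReal.ofReal (Real.exp (S1 - V1 - M * supNorm A φ))
          = ENNReal.ofReal (Real.exp (S1 - V1))
              * ENNReal.ofReal (Real.exp (-(M * supNorm A φ))) :=
            (GibbsAux.ofReal_exp_congr (by ring)).trans (GibbsAux.ofReal_exp_mul _ _).symm
        _ ≤ ENNReal.ofReal (Real.exp (S1 - V1)) * μ (OneCyl A (w (Fin.last (n+1)))) :=
            mul_le_mul_right (hone _) _
        _ ≤ ENNReal.ofReal (Real.exp (S1 - V1))
              * (ENNReal.ofReal (Real.exp (-S1 + V1)) * μ (Cyl A w)) :=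
            mul_le_mul_right hw1 _
        _ = ENNReal.ofReal (Real.exp ((S1 - V1) + (-S1 + V1))) * μ (Cyl A w) := by
            rw [← mul_assoc, GibbsAux.ofReal_exp_mul]
        _ = μ (Cyl A w) := by
            have : (S1 - V1) + (-S1 + V1) = 0 := by ring
            rw [this]
            simp
    refine le_trans ?_ hμw
    calc ENNReal.ofReal (Real.exp (-(2 * varSum A φ + M * supNorm A φ) + -(supNorm A φ)))
          * μ (Cyl A v)
        ≤ ENNReal.ofReal (Real.exp (-(2 * varSum A φ + M * supNorm A φ) + -(supNorm A φ)))
          * ENNReal.ofReal (Real.exp (S0 + V0)) := mul_le_mul_right hμv _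
      _ = ENNReal.ofReal (Real.exp ((-(2 * varSum A φ + M * supNorm A φ) + -(supNorm A φ))
            + (S0 + V0))) := GibbsAux.ofReal_exp_mul _ _
      _ ≤ ENNReal.ofReal (Real.exp (S1 - V1 - M * supNorm A φ)) := by
          refine GibbsAux.ofReal_exp_le ?_
          have hsucc : S1 = S0 + φ (shift1^[n] z) := by
            rw [hS1, hS0, Finset.sum_range_succ]
          have hphi : -(supNorm A φ) ≤ φ (shift1^[n] z) := by
            have := abs_le.mp (habs (shift1^[n] z))
            linarith [this.1]
          have h0 := hVm n
          have h1 := hVm (n+1)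
          rw [hsucc]
          rw [← hV0d] at h0
          rw [← hV1d] at h1
          linarith
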